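/- The kernel (x,ξ) ↦ xξ/(x²+ξ²) on (0,1)×(0,1) is positive semidefinite, and consequently so is (x,ξ) ↦ xξ/((x²+ξ²)(x+ξ)): for all u ∈ L²(0,1), ∫₀¹∫₀¹ u(x)u(ξ)·xξ/((x²+ξ²)(x+ξ)) dx dξ ≥ 0. -/

import Mathlib

open MeasureTheory Set Real Filter
open scoped ENNReal

lemma aux_exp_int {b : ℝ} (hb : 0 < b) :
    IntegrableOn (fun t => Real.exp (-(b * t))) (Ioi (0:ℝ)) := by
  simpa [neg_mul] using exp_neg_integrableOn_Ioi 0 hb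

lemma aux_exp_val {b : ℝ} (hb : 0 < b) :
    ∫ t in Ioi (0:ℝ), Real.exp (-(b * t)) = b⁻¹ := by
  have h := integral_comp_mul_left_Ioi (fun u => Real.exp (-u)) 0 hb
  simp only [mul_zero, smul_eq_mul] at h
  rw [h, integral_exp_neg_Ioi_zero, mul_one]

lemma aux_exp_lint {b : ℝ} (hb : 0 < b) :
    ∫⁻ t in Ioi (0:ℝ), ENNReal.ofReal (Real.exp (-(b * t))) = ENNReal.ofReal b⁻¹ := by
  rw [← ofReal_integral_eq_lintegral_ofReal (aux_exp_int hb)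
      (ae_of_all _ fun t => (Real.exp_pos _).le), aux_exp_val hb]

lemma aux_inv_add_sq {x : ℝ} (hx : 0 < x) :
    IntegrableOn (fun t : ℝ => (x + t^2)⁻¹) (Ioi (0:ℝ)) ∧
    ∫ t in Ioi (0:ℝ), (x + t^2)⁻¹ = π / (2 * Real.sqrt x) := by
  have hsx : 0 < Real.sqrt x := Real.sqrt_pos.mpr hx
  have hc : (0:ℝ) < (Real.sqrt x)⁻¹ := inv_pos.mpr hsx
  have hpt : ∀ t : ℝ, (x + t^2)⁻¹ = x⁻¹ * (1 + (t * (Real.sqrt x)⁻¹)^2)⁻¹ := by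
    intro t
    rw [← mul_inv]
    congr 1
    rw [mul_pow, inv_pow, Real.sq_sqrt hx.le]
    field_simp
  have h1 : Integrable (fun t : ℝ => (1 + (t * (Real.sqrt x)⁻¹)^2)⁻¹) :=
    integrable_inv_one_add_sq.comp_mul_right' (ne_of_gt hc)
  constructor
  · have : IntegrableOn (fun t : ℝ => x⁻¹ * (1 + (t * (Real.sqrt x)⁻¹)^2)⁻¹) (Ioi (0:ℝ)) :=
      (h1.const_mul x⁻¹).integrableOn
    exact this.congr_fun (fun t _ => (hpt t).symm) measurableSet_Ioi
  · have hval : ∫ t in Ioi (0:ℝ), (1 + (t * (Real.sqrt x)⁻¹)^2)⁻¹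
        = Real.sqrt x * (π/2) := by
      have h := integral_comp_mul_right_Ioi (fun u : ℝ => (1 + u^2)⁻¹) 0 hc
      simp only [zero_mul, smul_eq_mul, inv_inv] at h
      rw [h, integral_Ioi_inv_one_add_sq, arctan_zero, sub_zero]
    calc ∫ t in Ioi (0:ℝ), (x + t^2)⁻¹
        = ∫ t in Ioi (0:ℝ), x⁻¹ * (1 + (t * (Real.sqrt x)⁻¹)^2)⁻¹ := by
          exact setIntegral_congr_fun measurableSet_Ioi (fun t _ => hpt t)
      _ = x⁻¹ * (Real.sqrt x * (π/2)) := by rw [integral_const_mul, hval]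
      _ = (x⁻¹ * Real.sqrt x) * (π/2) := by ring
      _ = (Real.sqrt x)⁻¹ * (π/2) := by
          have hs : Real.sqrt x ≠ 0 := ne_of_gt hsx
          nth_rewrite 1 [(Real.mul_self_sqrt hx.le).symm]
          rw [mul_inv, mul_assoc (Real.sqrt x)⁻¹, inv_mul_cancel₀ hs, mul_one]
      _ = π / (2 * Real.sqrt x) := by
          rw [show π / (2 * Real.sqrt x) = π * ((2:ℝ)⁻¹ * (Real.sqrt x)⁻¹) by rw [div_eq_mul_inv, mul_inv]]
          ring_nf

lemma schur_val {x : ℝ} (hx : 0 < x) :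
    IntegrableOn (fun ξ => Real.sqrt (x/ξ) * (x+ξ)⁻¹) (Ioi (0:ℝ)) ∧
    ∫ ξ in Ioi (0:ℝ), Real.sqrt (x/ξ) * (x+ξ)⁻¹ = π := by
  set g : ℝ → ℝ := fun ξ => Real.sqrt (x/ξ) * (x+ξ)⁻¹ with hg
  have hsx : 0 < Real.sqrt x := Real.sqrt_pos.mpr hx
  have key : ∀ t : ℝ, t ∈ Ioi (0:ℝ) →
      t ^ ((2:ℝ) - 1) • g (t ^ (2:ℝ)) = Real.sqrt x * (x + t^2)⁻¹ := by
    intro t ht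
    have ht0 : (0:ℝ) < t := ht
    have h2 : t ^ ((2:ℝ)) = t^2 := by
      rw [show ((2:ℝ)) = ((2:ℕ):ℝ) by norm_num, Real.rpow_natCast]
    have h1 : t ^ ((2:ℝ) - 1) = t := by norm_num
    rw [h1, h2, hg]
    have : Real.sqrt (x / t^2) = Real.sqrt x / t := by
      rw [Real.sqrt_div hx.le, Real.sqrt_sq ht0.le]
    simp only [this]
    have htne : t ≠ 0 := ht0.ne'
    rw [smul_eq_mul, ← mul_assoc, mul_div_assoc', mul_comm t, mul_div_assoc, div_self htne, mul_one]
  have hint2 := (aux_inv_add_sq hx).1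
  constructor
  · rw [← integrableOn_Ioi_comp_rpow_iff' g (p := 2) (by norm_num)]
    exact IntegrableOn.congr_fun (hint2.const_mul (Real.sqrt x))
      (fun t ht => (key t ht).symm) measurableSet_Ioi
  · have h := integral_comp_rpow_Ioi_of_pos (g := g) (p := 2) (by norm_num)
    rw [← h]
    have : ∫ t in Ioi (0:ℝ), ((2:ℝ) * t ^ ((2:ℝ) - 1)) • g (t ^ (2:ℝ))
        = ∫ t in Ioi (0:ℝ), 2 * (Real.sqrt x * (x + t^2)⁻¹) := by
      refine setIntegral_congr_fun measurableSet_Ioi (fun t ht => ?_)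
      have h5 := key t ht
      rw [smul_eq_mul] at h5
      rw [smul_eq_mul, mul_assoc, h5]
    rw [this, integral_const_mul, integral_const_mul, (aux_inv_add_sq hx).2]
    rw [show π / (2 * Real.sqrt x) = π * ((2:ℝ)⁻¹ * (Real.sqrt x)⁻¹) by
      rw [div_eq_mul_inv, mul_inv]]
    have hsx' : Real.sqrt x ≠ 0 := ne_of_gt hsx
    field_simp

lemma schur_lint {x : ℝ} (hx : 0 < x) :
    ∫⁻ ξ in Ioo (0:ℝ) 1, ENNReal.ofReal (Real.sqrt (x/ξ) * (x+ξ)⁻¹)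
      ≤ ENNReal.ofReal π := by
  have h1 : ∫⁻ ξ in Ioo (0:ℝ) 1, ENNReal.ofReal (Real.sqrt (x/ξ) * (x+ξ)⁻¹)
      ≤ ∫⁻ ξ in Ioi (0:ℝ), ENNReal.ofReal (Real.sqrt (x/ξ) * (x+ξ)⁻¹) :=
    lintegral_mono_set Ioo_subset_Ioi_self
  refine h1.trans ?_
  rw [← ofReal_integral_eq_lintegral_ofReal (schur_val hx).1 ?_]
  · rw [(schur_val hx).2]
  · filter_upwards [ae_restrict_mem measurableSet_Ioi] with ξ hξ
    have : (0:ℝ) < x + ξ := by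
      have : (0:ℝ) < ξ := hξ
      linarith
    positivity

lemma psd_aux {ι : Type*} [MeasurableSpace ι] (ν : Measure ι) [SigmaFinite ν]
    (g : ι → ℝ → ℝ) (hg : Measurable (Function.uncurry g)) (hg0 : ∀ p x, 0 ≤ g p x)
    (v : ℝ → ℝ) (hv : Measurable v)
    (K : ℝ → ℝ → ℝ) (hKm : Measurable (Function.uncurry K))
    (hK0 : ∀ x ∈ Ioo (0:ℝ) 1, ∀ ξ ∈ Ioo (0:ℝ) 1, 0 ≤ K x ξ)
    (hrep : ∀ x ∈ Ioo (0:ℝ) 1, ∀ ξ ∈ Ioo (0:ℝ) 1,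
      ∫⁻ p, ENNReal.ofReal (g p x * g p ξ) ∂ν = ENNReal.ofReal (K x ξ))
    (hfin : (∫⁻ x in Ioo (0:ℝ) 1, ∫⁻ ξ in Ioo (0:ℝ) 1,
      ENNReal.ofReal (|v x| * |v ξ| * K x ξ)) ≠ ⊤) :
    0 ≤ ∫ x in Ioo (0:ℝ) 1, ∫ ξ in Ioo (0:ℝ) 1, v x * v ξ * K x ξ := by
  set μ : Measure ℝ := volume.restrict (Ioo (0:ℝ) 1) with hμ
  -- measurability facts
  have hvv : Measurable (fun z : ℝ × ℝ => v z.1 * v z.2) :=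
    (hv.comp measurable_fst).mul (hv.comp measurable_snd)
  have hKzm : Measurable (fun z : ℝ × ℝ => K z.1 z.2) := hKm
  have hWm : Measurable (fun z : ℝ × ℝ => v z.1 * v z.2 * K z.1 z.2) := hvv.mul hKzm
  have hmem : ∀ᵐ z ∂(μ.prod μ), z.1 ∈ Ioo (0:ℝ) 1 ∧ z.2 ∈ Ioo (0:ℝ) 1 := by
    rw [hμ, Measure.prod_restrict]
    filter_upwards [ae_restrict_mem (measurableSet_Ioo.prod measurableSet_Ioo)] with z hz
    exact ⟨hz.1, hz.2⟩
  -- finiteness of the kernel integrand over the product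
  have hWenorm : ∀ᵐ z ∂(μ.prod μ),
      (‖v z.1 * v z.2 * K z.1 z.2‖₊ : ℝ≥0∞)
        = ENNReal.ofReal (|v z.1| * |v z.2| * K z.1 z.2) := by
    filter_upwards [hmem] with z hz
    rw [← enorm_eq_nnnorm, Real.enorm_eq_ofReal_abs, abs_mul, abs_mul, abs_of_nonneg (hK0 _ hz.1 _ hz.2)]
  have hWfin : ∫⁻ z, (‖v z.1 * v z.2 * K z.1 z.2‖₊ : ℝ≥0∞) ∂(μ.prod μ) ≠ ⊤ := by
    rw [lintegral_congr_ae hWenorm,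
      lintegral_prod _ (by fun_prop : Measurable fun z : ℝ × ℝ =>
        ENNReal.ofReal (|v z.1| * |v z.2| * K z.1 z.2)).aemeasurable]
    exact hfin
  have hW : Integrable (fun z : ℝ × ℝ => v z.1 * v z.2 * K z.1 z.2) (μ.prod μ) :=
    ⟨hWm.aestronglyMeasurable, hWfin.lt_top⟩
  -- the factorized function on ι × (ℝ × ℝ)
  set F : ι × (ℝ × ℝ) → ℝ :=
    fun q => (v q.2.1 * g q.1 q.2.1) * (v q.2.2 * g q.1 q.2.2) with hF
  have hgm1 : Measurable (fun q : ι × (ℝ × ℝ) => g q.1 q.2.1) :=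
    hg.comp (measurable_fst.prodMk (measurable_fst.comp measurable_snd))
  have hgm2 : Measurable (fun q : ι × (ℝ × ℝ) => g q.1 q.2.2) :=
    hg.comp (measurable_fst.prodMk (measurable_snd.comp measurable_snd))
  have hFm : Measurable F :=
    (((hv.comp (measurable_fst.comp measurable_snd)).mul hgm1).mul
      ((hv.comp (measurable_snd.comp measurable_snd)).mul hgm2))
  -- finiteness of ∫⁻ ‖F‖
  have hFin : ∫⁻ q, (‖F q‖₊ : ℝ≥0∞) ∂(ν.prod (μ.prod μ)) ≠ ⊤ := by
    have hmeas : Measurable fun q : ι × (ℝ × ℝ) => (‖F q‖₊ : ℝ≥0∞) :=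
      hFm.enorm
    rw [lintegral_prod _ hmeas.aemeasurable]
    rw [lintegral_lintegral_swap (by fun_prop : Measurable fun q : ι × (ℝ × ℝ) =>
      (‖F q‖₊ : ℝ≥0∞)).aemeasurable]
    have hae : ∀ᵐ z ∂(μ.prod μ), ∫⁻ p, (‖F (p, z)‖₊ : ℝ≥0∞) ∂ν
        = ENNReal.ofReal (|v z.1| * |v z.2| * K z.1 z.2) := by
      filter_upwards [hmem] with z hz
      have hz1 := hz.1; have hz2 := hz.2
      have hpt : ∀ p, (‖F (p, z)‖₊ : ℝ≥0∞)
          = ENNReal.ofReal (|v z.1| * |v z.2|) * ENNReal.ofReal (g p z.1 * g p z.2) := by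
        intro p
        rw [← enorm_eq_nnnorm, Real.enorm_eq_ofReal_abs, ← ENNReal.ofReal_mul (by positivity)]
        congr 1
        rw [hF]
        simp only [abs_mul, abs_of_nonneg (hg0 p z.1), abs_of_nonneg (hg0 p z.2)]
        ring
      simp only [hpt]
      rw [lintegral_const_mul' _ _ ENNReal.ofReal_ne_top,
        hrep z.1 hz1 z.2 hz2, ← ENNReal.ofReal_mul (by positivity)]
    rw [lintegral_congr_ae hae,
      lintegral_prod _ (by fun_prop : Measurable fun z : ℝ × ℝ =>
        ENNReal.ofReal (|v z.1| * |v z.2| * K z.1 z.2)).aemeasurable]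
    exact hfin
  have hFint : Integrable F (ν.prod (μ.prod μ)) := ⟨hFm.aestronglyMeasurable, hFin.lt_top⟩
  -- identification of the partial integral in p
  have hae2 : ∀ᵐ z ∂(μ.prod μ), ∫ p, F (p, z) ∂ν = v z.1 * v z.2 * K z.1 z.2 := by
    filter_upwards [hmem] with z hz
    have : ∀ p, F (p, z) = (v z.1 * v z.2) * (g p z.1 * g p z.2) := by
      intro p; rw [hF]; ring
    simp only [this]
    rw [integral_const_mul]
    have hnn : 0 ≤ᵐ[ν] fun p => g p z.1 * g p z.2 :=
      ae_of_all _ fun p => mul_nonneg (hg0 p z.1) (hg0 p z.2)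
    have hms : AEStronglyMeasurable (fun p => g p z.1 * g p z.2) ν := by
      apply Measurable.aestronglyMeasurable
      exact (hg.comp (measurable_id.prodMk measurable_const)).mul
        (hg.comp (measurable_id.prodMk measurable_const))
    rw [integral_eq_lintegral_of_nonneg_ae hnn hms, hrep z.1 hz.1 z.2 hz.2,
      ENNReal.toReal_ofReal (hK0 _ hz.1 _ hz.2)]
  -- put it together
  have step1 : (∫ x in Ioo (0:ℝ) 1, ∫ ξ in Ioo (0:ℝ) 1, v x * v ξ * K x ξ)
      = ∫ z, v z.1 * v z.2 * K z.1 z.2 ∂(μ.prod μ) :=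
    (integral_prod _ hW).symm
  have step2 : ∫ z, v z.1 * v z.2 * K z.1 z.2 ∂(μ.prod μ)
      = ∫ z, (∫ p, F (p, z) ∂ν) ∂(μ.prod μ) :=
    integral_congr_ae (hae2.mono fun z h => h.symm)
  have step3 : ∫ z, (∫ p, F (p, z) ∂ν) ∂(μ.prod μ)
      = ∫ q, F q ∂(ν.prod (μ.prod μ)) :=
    (integral_prod_symm _ hFint).symm
  have step4 : ∫ q, F q ∂(ν.prod (μ.prod μ))
      = ∫ p, (∫ x, v x * g p x ∂μ) * (∫ x, v x * g p x ∂μ) ∂ν := by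
    rw [integral_prod _ hFint]
    refine integral_congr_ae (ae_of_all _ fun p => ?_)
    exact integral_prod_mul (fun x => v x * g p x) (fun x => v x * g p x)
  rw [step1, step2, step3, step4]
  exact integral_nonneg fun p => mul_self_nonneg _

lemma k1_rep {x ξ : ℝ} (hx : 0 < x) (hξ : 0 < ξ) :
    ∫⁻ t in Ioi (0:ℝ),
        ENNReal.ofReal ((|x| * Real.exp (-(t * x^2))) * (|ξ| * Real.exp (-(t * ξ^2))))
      = ENNReal.ofReal (x * ξ / (x^2 + ξ^2)) := by
  have hb : (0:ℝ) < x^2 + ξ^2 := by positivity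
  have hpt : ∀ t : ℝ, (|x| * Real.exp (-(t * x^2))) * (|ξ| * Real.exp (-(t * ξ^2)))
      = (x * ξ) * Real.exp (-((x^2 + ξ^2) * t)) := by
    intro t
    rw [abs_of_pos hx, abs_of_pos hξ,
      show -((x^2+ξ^2)*t) = -(t*x^2) + -(t*ξ^2) by ring, Real.exp_add]
    ring
  simp only [hpt]
  have : ∀ t : ℝ, ENNReal.ofReal ((x * ξ) * Real.exp (-((x^2 + ξ^2) * t)))
      = ENNReal.ofReal (x * ξ) * ENNReal.ofReal (Real.exp (-((x^2 + ξ^2) * t))) := by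
    intro t; rw [ENNReal.ofReal_mul (by positivity)]
  simp only [this]
  rw [lintegral_const_mul' _ _ ENNReal.ofReal_ne_top, aux_exp_lint hb,
    ← ENNReal.ofReal_mul (by positivity), div_eq_mul_inv]

lemma part1 (v : ℝ → ℝ) (hv : Measurable v)
    (hvL2 : MemLp v 2 (volume.restrict (Ioo (0:ℝ) 1))) :
    0 ≤ ∫ x in Ioo (0:ℝ) 1, ∫ ξ in Ioo (0:ℝ) 1, v x * v ξ * (x * ξ / (x^2 + ξ^2)) := by
  haveI : IsFiniteMeasure (volume.restrict (Ioo (0:ℝ) 1)) := by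
    constructor
    rw [Measure.restrict_apply_univ, Real.volume_Ioo]
    simp
  have hvint : Integrable v (volume.restrict (Ioo (0:ℝ) 1)) :=
    hvL2.integrable one_le_two
  have hvfin : ∫⁻ x in Ioo (0:ℝ) 1, ENNReal.ofReal |v x| ≠ ⊤ := by
    have := hvint.2
    rw [hasFiniteIntegral_def] at this
    simpa only [Real.enorm_eq_ofReal_abs] using this.ne
  have hKb : ∀ x ξ : ℝ, x * ξ / (x^2 + ξ^2) ≤ 1/2 := by
    intro x ξ
    rcases eq_or_ne (x^2 + ξ^2) 0 with h | h
    · rw [h, div_zero]; norm_num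
    · have hpos : 0 < x^2 + ξ^2 := lt_of_le_of_ne (by positivity) (Ne.symm h)
      rw [div_le_iff₀ hpos]
      nlinarith [sq_nonneg (x - ξ)]
  apply psd_aux (volume.restrict (Ioi (0:ℝ)))
    (fun t x => |x| * Real.exp (-(t * x^2))) (by fun_prop) ?_ v hv _ (by fun_prop) ?_ ?_ ?_
  · intro p x; positivity
  · intro x hx ξ hξ
    exact div_nonneg (mul_nonneg hx.1.le hξ.1.le) (by positivity)
  · intro x hx ξ hξ
    exact k1_rep hx.1 hξ.1
  · set J := ∫⁻ ξ in Ioo (0:ℝ) 1, ENNReal.ofReal |v ξ| with hJ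
    have h1 : ∀ x : ℝ, (∫⁻ ξ in Ioo (0:ℝ) 1,
        ENNReal.ofReal (|v x| * |v ξ| * (x * ξ / (x^2 + ξ^2))))
        ≤ (ENNReal.ofReal |v x| * ENNReal.ofReal (1/2)) * J := by
      intro x
      rw [hJ, ← lintegral_const_mul' _ _
        (ENNReal.mul_ne_top ENNReal.ofReal_ne_top ENNReal.ofReal_ne_top)]
      refine lintegral_mono fun ξ => ?_
      rw [← ENNReal.ofReal_mul (abs_nonneg _), ← ENNReal.ofReal_mul (by positivity)]
      refine ENNReal.ofReal_le_ofReal ?_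
      calc |v x| * |v ξ| * (x * ξ / (x^2 + ξ^2))
          ≤ |v x| * |v ξ| * (1/2) :=
            mul_le_mul_of_nonneg_left (hKb x ξ) (mul_nonneg (abs_nonneg _) (abs_nonneg _))
        _ = |v x| * (1/2) * |v ξ| := by ring
    have h2 : (∫⁻ x in Ioo (0:ℝ) 1, ∫⁻ ξ in Ioo (0:ℝ) 1,
        ENNReal.ofReal (|v x| * |v ξ| * (x * ξ / (x^2 + ξ^2))))
        ≤ (ENNReal.ofReal (1/2) * J) * (∫⁻ x in Ioo (0:ℝ) 1, ENNReal.ofReal |v x|) := by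
      rw [← lintegral_const_mul' _ _
        (ENNReal.mul_ne_top ENNReal.ofReal_ne_top (by rw [hJ]; exact hvfin))]
      refine lintegral_mono fun x => le_trans (h1 x) (le_of_eq ?_)
      ring
    refine ne_top_of_le_ne_top ?_ h2
    exact ENNReal.mul_ne_top (ENNReal.mul_ne_top ENNReal.ofReal_ne_top hvfin) hvfin

lemma hilbert_fin (v : ℝ → ℝ) (hv : Measurable v)
    (hvL2 : MemLp v 2 (volume.restrict (Ioo (0:ℝ) 1))) :
    (∫⁻ x in Ioo (0:ℝ) 1, ∫⁻ ξ in Ioo (0:ℝ) 1,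
      ENNReal.ofReal (|v x| * |v ξ| * (x + ξ)⁻¹)) ≠ ⊤ := by
  have hsq : Integrable (fun x => v x ^ 2) (volume.restrict (Ioo (0:ℝ) 1)) :=
    hvL2.integrable_sq
  have hsqfin : ∫⁻ x in Ioo (0:ℝ) 1, ENNReal.ofReal ((1/2) * |v x|^2) ≠ ⊤ := by
    have h := hsq.2
    rw [hasFiniteIntegral_def] at h
    have : ∀ x : ℝ, ENNReal.ofReal ((1/2) * |v x|^2)
        ≤ (‖v x ^ 2‖₊ : ℝ≥0∞) := by
      intro x
      rw [← enorm_eq_nnnorm, Real.enorm_eq_ofReal_abs, abs_of_nonneg (sq_nonneg (v x))]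
      refine ENNReal.ofReal_le_ofReal ?_
      rw [sq_abs]
      nlinarith [sq_nonneg (v x)]
    exact ne_top_of_le_ne_top h.ne (lintegral_mono this)
  set P : ℝ → ℝ → ℝ≥0∞ := fun x ξ =>
    ENNReal.ofReal ((1/2 * |v x|^2) * (Real.sqrt (x/ξ) * (x+ξ)⁻¹)) with hP
  set Q : ℝ → ℝ → ℝ≥0∞ := fun x ξ =>
    ENNReal.ofReal ((1/2 * |v ξ|^2) * (Real.sqrt (ξ/x) * (x+ξ)⁻¹)) with hQ
  have hPzm : Measurable (Function.uncurry P) := by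
    simp only [hP, Function.uncurry]; fun_prop
  have hQzm : Measurable (Function.uncurry Q) := by
    simp only [hQ, Function.uncurry]; fun_prop
  -- pointwise bound
  have step1 : (∫⁻ x in Ioo (0:ℝ) 1, ∫⁻ ξ in Ioo (0:ℝ) 1,
      ENNReal.ofReal (|v x| * |v ξ| * (x + ξ)⁻¹))
      ≤ ∫⁻ x in Ioo (0:ℝ) 1, ∫⁻ ξ in Ioo (0:ℝ) 1, (P x ξ + Q x ξ) := by
    refine lintegral_mono_ae ?_
    filter_upwards [ae_restrict_mem measurableSet_Ioo] with x hx
    refine lintegral_mono_ae ?_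
    filter_upwards [ae_restrict_mem measurableSet_Ioo] with ξ hξ
    simp only [hP, hQ]
    have hx0 : (0:ℝ) < x := hx.1
    have hξ0 : (0:ℝ) < ξ := hξ.1
    have hxξ : (0:ℝ) ≤ (x+ξ)⁻¹ := inv_nonneg.mpr (by linarith)
    have hA : (0:ℝ) ≤ 1/2 * |v x|^2 * (Real.sqrt (x/ξ) * (x+ξ)⁻¹) :=
      mul_nonneg (by positivity) (mul_nonneg (Real.sqrt_nonneg _) hxξ)
    have hB : (0:ℝ) ≤ 1/2 * |v ξ|^2 * (Real.sqrt (ξ/x) * (x+ξ)⁻¹) :=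
      mul_nonneg (by positivity) (mul_nonneg (Real.sqrt_nonneg _) hxξ)
    rw [← ENNReal.ofReal_add hA hB]
    refine ENNReal.ofReal_le_ofReal ?_
    have hr : 0 < Real.sqrt (x/ξ) := Real.sqrt_pos.mpr (div_pos hx0 hξ0)
    have hr2 : Real.sqrt (ξ/x) = (Real.sqrt (x/ξ))⁻¹ := by
      rw [show ξ/x = (x/ξ)⁻¹ by rw [inv_div], Real.sqrt_inv]
    set a := |v x|; set b := |v ξ|; set r := Real.sqrt (x/ξ)
    have hinv : (0:ℝ) ≤ (x+ξ)⁻¹ := hxξ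
    have hrr : r * r⁻¹ = 1 := mul_inv_cancel₀ (ne_of_gt hr)
    have core : a*b ≤ 1/2*(a^2*r) + 1/2*(b^2*r⁻¹) := by
      rw [← mul_le_mul_iff_left₀ hr]
      nlinarith [sq_nonneg (a*r - b), hrr, hr.le]
    rw [hr2]
    calc a * b * (x+ξ)⁻¹ ≤ (1/2*(a^2*r) + 1/2*(b^2*r⁻¹)) * (x+ξ)⁻¹ :=
          mul_le_mul_of_nonneg_right core hinv
      _ = (1/2*a^2) * (r*(x+ξ)⁻¹) + (1/2*b^2) * (r⁻¹*(x+ξ)⁻¹) := by ring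
  -- split the sum
  have step2 : (∫⁻ x in Ioo (0:ℝ) 1, ∫⁻ ξ in Ioo (0:ℝ) 1, (P x ξ + Q x ξ))
      = (∫⁻ x in Ioo (0:ℝ) 1, ∫⁻ ξ in Ioo (0:ℝ) 1, P x ξ)
        + (∫⁻ x in Ioo (0:ℝ) 1, ∫⁻ ξ in Ioo (0:ℝ) 1, Q x ξ) := by
    have hin : ∀ x : ℝ, (∫⁻ ξ in Ioo (0:ℝ) 1, (P x ξ + Q x ξ))
        = (∫⁻ ξ in Ioo (0:ℝ) 1, P x ξ) + (∫⁻ ξ in Ioo (0:ℝ) 1, Q x ξ) := by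
      intro x
      have hm : Measurable fun ξ => P x ξ := by simp only [hP]; fun_prop
      exact lintegral_add_left hm _
    simp only [hin]
    have hmo : Measurable fun x => ∫⁻ ξ in Ioo (0:ℝ) 1, P x ξ :=
      Measurable.lintegral_prod_right (f := P) hPzm
    exact lintegral_add_left hmo _
  -- bound the P term
  have hPbound : (∫⁻ x in Ioo (0:ℝ) 1, ∫⁻ ξ in Ioo (0:ℝ) 1, P x ξ)
      ≤ ENNReal.ofReal π * ∫⁻ x in Ioo (0:ℝ) 1, ENNReal.ofReal ((1/2) * |v x|^2) := by
    rw [← lintegral_const_mul' _ _ ENNReal.ofReal_ne_top]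
    refine lintegral_mono_ae ?_
    filter_upwards [ae_restrict_mem measurableSet_Ioo] with x hx
    have hsplit : ∀ ξ : ℝ, P x ξ
        = ENNReal.ofReal (1/2 * |v x|^2)
          * ENNReal.ofReal (Real.sqrt (x/ξ) * (x+ξ)⁻¹) := by
      intro ξ
      simp only [hP]
      rw [ENNReal.ofReal_mul (by positivity)]
    simp only [hsplit]
    rw [lintegral_const_mul' _ _ ENNReal.ofReal_ne_top]
    rw [mul_comm (ENNReal.ofReal π)]
    exact mul_le_mul_right (schur_lint hx.1) _
  have hPfin : (∫⁻ x in Ioo (0:ℝ) 1, ∫⁻ ξ in Ioo (0:ℝ) 1, P x ξ) ≠ ⊤ :=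
    ne_top_of_le_ne_top (ENNReal.mul_ne_top ENNReal.ofReal_ne_top hsqfin) hPbound
  -- the Q term equals the P term after swapping
  have hQP : (∫⁻ x in Ioo (0:ℝ) 1, ∫⁻ ξ in Ioo (0:ℝ) 1, Q x ξ)
      = (∫⁻ x in Ioo (0:ℝ) 1, ∫⁻ ξ in Ioo (0:ℝ) 1, P x ξ) := by
    rw [lintegral_lintegral_swap hQzm.aemeasurable]
    refine lintegral_congr fun ξ => lintegral_congr fun x => ?_
    simp only [hP, hQ]
    rw [add_comm]
  refine ne_top_of_le_ne_top ?_ (step1.trans (le_of_eq step2))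
  rw [hQP]
  exact ENNReal.add_ne_top.mpr ⟨hPfin, hPfin⟩

lemma k1_le_half (x ξ : ℝ) : x * ξ / (x^2 + ξ^2) ≤ 1/2 := by
  rcases eq_or_ne (x^2 + ξ^2) 0 with h | h
  · rw [h, div_zero]; norm_num
  · have hpos : 0 < x^2 + ξ^2 := lt_of_le_of_ne (by positivity) (Ne.symm h)
    rw [div_le_iff₀ hpos]
    nlinarith [sq_nonneg (x - ξ)]

lemma k2_rep {x ξ : ℝ} (hx : 0 < x) (hξ : 0 < ξ) :
    ∫⁻ p : ℝ × ℝ,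
        ENNReal.ofReal ((|x| * Real.exp (-(p.2 * x^2)) * Real.exp (-(p.1 * x)))
          * (|ξ| * Real.exp (-(p.2 * ξ^2)) * Real.exp (-(p.1 * ξ))))
        ∂((volume.restrict (Ioi (0:ℝ))).prod (volume.restrict (Ioi (0:ℝ))))
      = ENNReal.ofReal (x * ξ / ((x^2 + ξ^2) * (x + ξ))) := by
  have hpt : ∀ p : ℝ × ℝ,
      ENNReal.ofReal ((|x| * Real.exp (-(p.2 * x^2)) * Real.exp (-(p.1 * x)))
          * (|ξ| * Real.exp (-(p.2 * ξ^2)) * Real.exp (-(p.1 * ξ))))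
      = ENNReal.ofReal (Real.exp (-((x + ξ) * p.1)))
        * ENNReal.ofReal ((|x| * Real.exp (-(p.2 * x^2))) * (|ξ| * Real.exp (-(p.2 * ξ^2)))) := by
    intro p
    rw [← ENNReal.ofReal_mul (by positivity)]
    congr 1
    rw [show -((x + ξ) * p.1) = -(p.1 * x) + -(p.1 * ξ) by ring, Real.exp_add]
    ring
  simp only [hpt]
  have hsw := lintegral_prod_mul (μ := volume.restrict (Ioi (0:ℝ)))
    (ν := volume.restrict (Ioi (0:ℝ)))
    (f := fun s => ENNReal.ofReal (Real.exp (-((x+ξ) * s))))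
    (g := fun t => ENNReal.ofReal ((|x| * Real.exp (-(t * x^2)))
      * (|ξ| * Real.exp (-(t * ξ^2)))))
    (by fun_prop) (by fun_prop)
  rw [hsw]
  beta_reduce
  rw [aux_exp_lint (by linarith : (0:ℝ) < x + ξ), k1_rep hx hξ,
    ← ENNReal.ofReal_mul (by positivity)]
  congr 1
  rw [mul_comm, ← div_div, div_eq_mul_inv, div_eq_mul_inv]

lemma part2 (v : ℝ → ℝ) (hv : Measurable v)
    (hvL2 : MemLp v 2 (volume.restrict (Ioo (0:ℝ) 1))) :
    0 ≤ ∫ x in Ioo (0:ℝ) 1, ∫ ξ in Ioo (0:ℝ) 1,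
        v x * v ξ * (x * ξ / ((x^2 + ξ^2) * (x + ξ))) := by
  apply psd_aux ((volume.restrict (Ioi (0:ℝ))).prod (volume.restrict (Ioi (0:ℝ))))
    (fun p x => |x| * Real.exp (-(p.2 * x^2)) * Real.exp (-(p.1 * x)))
    (by fun_prop) ?_ v hv _ (by fun_prop) ?_ ?_ ?_
  · intro p x; positivity
  · intro x hx ξ hξ
    have h1 : (0:ℝ) < (x^2 + ξ^2) * (x + ξ) := by
      have := hx.1; have := hξ.1
      positivity
    exact div_nonneg (mul_nonneg hx.1.le hξ.1.le) h1.le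
  · intro x hx ξ hξ
    exact k2_rep hx.1 hξ.1
  · refine ne_top_of_le_ne_top (hilbert_fin v hv hvL2) ?_
    refine lintegral_mono_ae ?_
    filter_upwards [ae_restrict_mem measurableSet_Ioo] with x hx
    refine lintegral_mono_ae ?_
    filter_upwards [ae_restrict_mem measurableSet_Ioo] with ξ hξ
    refine ENNReal.ofReal_le_ofReal ?_
    have hx0 : (0:ℝ) < x := hx.1
    have hξ0 : (0:ℝ) < ξ := hξ.1
    have hK2 : x * ξ / ((x^2 + ξ^2) * (x + ξ)) ≤ (x + ξ)⁻¹ := by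
      rw [← div_div, div_eq_mul_inv (x * ξ / (x^2 + ξ^2))]
      calc x * ξ / (x^2 + ξ^2) * (x + ξ)⁻¹
          ≤ 1 * (x + ξ)⁻¹ := by
            refine mul_le_mul_of_nonneg_right ?_ (inv_nonneg.mpr (by linarith))
            exact (k1_le_half x ξ).trans (by norm_num)
        _ = (x + ξ)⁻¹ := one_mul _
    exact mul_le_mul_of_nonneg_left hK2 (mul_nonneg (abs_nonneg _) (abs_nonneg _))

/-- The kernel xξ/(x²+ξ²) is positive semidefinite on L²(0,1), and consequently so is
xξ/((x²+ξ²)(x+ξ)). -/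
theorem stmt15 (u : ℝ → ℝ)
    (hu : MeasureTheory.MemLp u 2 (MeasureTheory.volume.restrict (Set.Ioo (0:ℝ) 1))) :
    0 ≤ (∫ x in Set.Ioo (0:ℝ) 1, ∫ ξ in Set.Ioo (0:ℝ) 1,
        u x * u ξ * (x * ξ / (x^2 + ξ^2))) ∧
    0 ≤ (∫ x in Set.Ioo (0:ℝ) 1, ∫ ξ in Set.Ioo (0:ℝ) 1,
        u x * u ξ * (x * ξ / ((x^2 + ξ^2) * (x + ξ)))) := by
  obtain ⟨v, hvsm, huv⟩ := hu.1
  have hv : Measurable v := hvsm.measurable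
  have hvL2 : MemLp v 2 (volume.restrict (Ioo (0:ℝ) 1)) := hu.ae_eq huv
  constructor
  · have he : (∫ x in Ioo (0:ℝ) 1, ∫ ξ in Ioo (0:ℝ) 1, u x * u ξ * (x * ξ / (x^2 + ξ^2)))
        = ∫ x in Ioo (0:ℝ) 1, ∫ ξ in Ioo (0:ℝ) 1, v x * v ξ * (x * ξ / (x^2 + ξ^2)) := by
      apply integral_congr_ae
      filter_upwards [huv] with x hx
      apply integral_congr_ae
      filter_upwards [huv] with ξ hξ
      rw [hx, hξ]
    rw [he]
    exact part1 v hv hvL2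
  · have he : (∫ x in Ioo (0:ℝ) 1, ∫ ξ in Ioo (0:ℝ) 1,
        u x * u ξ * (x * ξ / ((x^2 + ξ^2) * (x + ξ))))
        = ∫ x in Ioo (0:ℝ) 1, ∫ ξ in Ioo (0:ℝ) 1,
          v x * v ξ * (x * ξ / ((x^2 + ξ^2) * (x + ξ))) := by
      apply integral_congr_ae
      filter_upwards [huv] with x hx
      apply integral_congr_ae
      filter_upwards [huv] with ξ hξ
      rw [hx, hξ]
    rw [he]
    exact part2 v hv hvL2
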